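/- arXiv:1603.03982 — 2 statements merged into one kernel-verified Lean document; each statement's English description precedes it below -/
import Mathlib

section
/- Let $H$ be a complex Hilbert space, $A_0 : H \to H$ a bounded operator with one-dimensional kernel spanned by a unit vector $\Psi_0$, and one-dimensional cokernel: $\mathrm{Ker}(A_0^*) = \mathrm{span}\{\Phi_0\}$ with $\|\Phi_0\| = 1$. Suppose $\tilde{A}_0 = A_0 + P_0$ is invertible, where $P_0 x = \langle x, \Psi_0 \rangle \Phi_0$. Let $B$ be a bounded operator with $\|B\| < \|\tilde{A}_0^{-1}\|^{-1}$. Then a vector $\Psi = \Psi_0 + \Psi_1$ with $\langle \Psi_1, \Psi_0 \rangle = 0$ satisfies $(A_0 + B)\Psi = 0$ if and only if $\Psi_1 = (\tilde{A}_0 + B)^{-1}\Phi_0 - \Psi_0$ and $\langle (\tilde{A}_0 + B)^{-1}\Phi_0, \Psi_0 \rangle = 1$. -/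
open scoped InnerProductSpace

/-- Reduction of the characteristic value problem `(A₀ + B)Ψ = 0` to the scalar equation
`⟨(Ã₀ + B)⁻¹ Φ₀, Ψ₀⟩ = 1`, where `Ã₀ = A₀ + P₀`, `P₀ x = ⟨x, Ψ₀⟩Φ₀`, `Ker A₀ = span Ψ₀`,
`Ker A₀* = span Φ₀`, `Ã₀` invertible and `‖B‖ < ‖Ã₀⁻¹‖⁻¹`. -/
theorem stmt2 {H : Type*} [NormedAddCommGroup H] [InnerProductSpace ℂ H] [CompleteSpace H]
    (A₀ : H →L[ℂ] H) (Ψ₀ Φ₀ : H) (hΨ : ‖Ψ₀‖ = 1) (hΦ : ‖Φ₀‖ = 1)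
    (hker : LinearMap.ker (A₀ : H →ₗ[ℂ] H) = ℂ ∙ Ψ₀)
    (hcoker : LinearMap.ker ((ContinuousLinearMap.adjoint A₀ : H →L[ℂ] H) : H →ₗ[ℂ] H)
      = ℂ ∙ Φ₀)
    (P₀ : H →L[ℂ] H) (hP : ∀ x, P₀ x = (⟪Ψ₀, x⟫_ℂ) • Φ₀)
    (hA : IsUnit (A₀ + P₀))
    (B : H →L[ℂ] H) (hB : ‖B‖ < ‖Ring.inverse (A₀ + P₀)‖⁻¹)
    (Ψ₁ : H) (horth : ⟪Ψ₀, Ψ₁⟫_ℂ = 0) :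
    (A₀ + B) (Ψ₀ + Ψ₁) = 0 ↔
      (Ψ₁ = Ring.inverse (A₀ + P₀ + B) Φ₀ - Ψ₀ ∧
       ⟪Ψ₀, Ring.inverse (A₀ + P₀ + B) Φ₀⟫_ℂ = 1) := by
  -- `A₀ + P₀ + B` is a unit
  have hBu : ‖B‖ < ‖(↑hA.unit⁻¹ : H →L[ℂ] H)‖⁻¹ := by
    have : Ring.inverse (A₀ + P₀) = (↑hA.unit⁻¹ : H →L[ℂ] H) := by
      conv_lhs => rw [← hA.unit_spec]
      rw [Ring.inverse_unit]
    rwa [this] at hB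
  have hT : IsUnit (A₀ + P₀ + B) := by
    have := (Units.add hA.unit B hBu).isUnit
    simpa [Units.add, hA.unit_spec] using this
  set T := A₀ + P₀ + B with hTdef
  have hinv1 : ∀ x, Ring.inverse T (T x) = x := by
    intro x
    have h := Ring.inverse_mul_cancel T hT
    have := congrArg (fun f : H →L[ℂ] H => f x) h
    simpa [ContinuousLinearMap.mul_apply] using this
  have hinv2 : ∀ x, T (Ring.inverse T x) = x := by
    intro x
    have h := Ring.mul_inverse_cancel T hT
    have := congrArg (fun f : H →L[ℂ] H => f x) h
    simpa [ContinuousLinearMap.mul_apply] using this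
  have hPval : P₀ (Ψ₀ + Ψ₁) = Φ₀ := by
    rw [hP, inner_add_right, horth, add_zero, inner_self_eq_norm_sq_to_K, hΨ]
    norm_num
  have hTsum : ∀ x, T x = (A₀ + B) x + P₀ x := by
    intro x
    simp only [hTdef, ContinuousLinearMap.add_apply]
    abel
  constructor
  · intro h
    have key : T (Ψ₀ + Ψ₁) = Φ₀ := by rw [hTsum, h, hPval, zero_add]
    have hsum : Ψ₀ + Ψ₁ = Ring.inverse T Φ₀ := by
      rw [← key, hinv1]
    constructor
    · rw [← hsum]; abel
    · rw [← hsum, inner_add_right, horth, add_zero, inner_self_eq_norm_sq_to_K, hΨ]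
      norm_num
  · rintro ⟨h1, h2⟩
    have hsum : Ψ₀ + Ψ₁ = Ring.inverse T Φ₀ := by rw [h1]; abel
    have key : T (Ψ₀ + Ψ₁) = Φ₀ := by rw [hsum, hinv2]
    have := hTsum (Ψ₀ + Ψ₁)
    rw [key, hPval] at this
    linear_combination (norm := abel) -this
end

section
/- Let $f(\omega) = \alpha \omega^2 \ln \omega + \beta \omega^2 - g$, where $\alpha > 0$ is real, $\beta \in \mathbb{C}$, and $g = g(\delta) = \kappa \delta$ for a constant $\kappa \neq 0$. Then for all sufficiently small $\delta > 0$, any root $\omega$ of $f$ with $|\omega| \to 0$ as $\delta \to 0$ satisfies $|\omega|^2 |\ln \omega| \asymp \delta$, i.e., there exist constants $0 < c_1 < c_2$ independent of $\delta$ such that $c_1 \delta \leq |\omega|^2 |\ln|\omega|| \leq c_2 \delta$. -/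
open Filter
open scoped Topology

/-- Scaling of the two-dimensional Minnaert resonance: if `ω(δ)` is a root of
`α ω² ln ω + β ω² - κδ = 0` (for `δ > 0` small) tending to `0` as `δ → 0⁺`, then
`|ω|² |ln|ω||` is comparable to `δ`: `c₁ δ ≤ |ω(δ)|² |ln|ω(δ)|| ≤ c₂ δ`. -/
theorem stmt16 (α : ℝ) (hα : 0 < α) (β κ : ℂ) (hκ : κ ≠ 0)
    (ω : ℝ → ℂ)
    (hroot : ∀ᶠ δ in 𝓝[>] (0 : ℝ),
      (α : ℂ) * ω δ ^ 2 * Complex.log (ω δ) + β * ω δ ^ 2 - κ * (δ : ℂ) = 0)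
    (hω0 : Tendsto ω (𝓝[>] (0 : ℝ)) (𝓝 0)) :
    ∃ c₁ c₂ : ℝ, 0 < c₁ ∧ c₁ < c₂ ∧
      ∀ᶠ δ in 𝓝[>] (0 : ℝ),
        c₁ * δ ≤ ‖ω δ‖ ^ 2 * |Real.log ‖ω δ‖| ∧
        ‖ω δ‖ ^ 2 * |Real.log ‖ω δ‖| ≤ c₂ * δ := by
  have hκ0 : (0:ℝ) < ‖κ‖ := norm_pos_iff.mpr hκ
  set C : ℝ := α * Real.pi + ‖β‖ with hCdef
  have hC0 : 0 < C := by positivity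
  refine ⟨‖κ‖ / (2 * α), 2 * ‖κ‖ / α, by positivity, ?_, ?_⟩
  · rw [div_lt_div_iff₀ (by positivity) hα]
    nlinarith
  · have hsmall : ∀ᶠ δ in 𝓝[>] (0:ℝ), ‖ω δ‖ < Real.exp (-(2 * C / α + 1)) := by
      have hn : Tendsto (fun δ => ‖ω δ‖) (𝓝[>] (0:ℝ)) (𝓝 0) := by
        simpa using hω0.norm
      exact hn.eventually_lt_const (by positivity)
    filter_upwards [hroot, hsmall, self_mem_nhdsWithin] with δ hr hs hδ
    have hδ0 : (0:ℝ) < δ := hδ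
    set z := ω δ with hz
    have hzne : z ≠ 0 := by
      intro h
      rw [h] at hr
      simp at hr
      rcases hr with hr | hr
      · exact hκ hr
      · exact absurd (by exact_mod_cast hr) (ne_of_gt hδ0)
    have hznorm : (0:ℝ) < ‖z‖ := norm_pos_iff.mpr hzne
    set L : ℝ := Real.log ‖z‖ with hL
    -- L is very negative
    have hLlt : L < -(2 * C / α + 1) := by
      have := Real.log_lt_log hznorm hs
      rwa [Real.log_exp] at this
    have hLneg : L < 0 := by
      have h : 0 < 2 * C / α + 1 := by positivity
      linarith
    have habs : |L| = -L := abs_of_neg hLneg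
    have hLbig : 2 * C / α ≤ |L| := by rw [habs]; linarith
    -- the equation in product form
    have hEq : κ * (δ:ℂ) = z ^ 2 * ((α:ℂ) * Complex.log z + β) := by
      linear_combination -hr
    have hlogz : Complex.log z = (L : ℂ) + (Complex.arg z : ℂ) * Complex.I := by
      rw [Complex.log, hL]
    -- norm of the factor
    set B : ℝ := ‖(α:ℂ) * Complex.log z + β‖ with hB
    have hdecomp : (α:ℂ) * Complex.log z + β
        = ((α * L : ℝ) : ℂ) + ((α:ℂ) * ((Complex.arg z : ℂ) * Complex.I) + β) := by
      rw [hlogz]; push_cast; ring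
    have hrest : ‖(α:ℂ) * ((Complex.arg z : ℂ) * Complex.I) + β‖ ≤ C := by
      calc ‖(α:ℂ) * ((Complex.arg z : ℂ) * Complex.I) + β‖
          ≤ ‖(α:ℂ) * ((Complex.arg z : ℂ) * Complex.I)‖ + ‖β‖ := norm_add_le _ _
        _ ≤ α * Real.pi + ‖β‖ := by
            gcongr ?_ + ‖β‖
            rw [norm_mul, norm_mul, Complex.norm_I, mul_one, Complex.norm_real,
              Complex.norm_real, Real.norm_eq_abs, Real.norm_eq_abs,
              abs_of_pos hα]
            gcongr
            exact Complex.abs_arg_le_pi z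
        _ = C := rfl
    have hmain : ‖((α * L : ℝ) : ℂ)‖ = α * |L| := by
      rw [Complex.norm_real, Real.norm_eq_abs, abs_mul, abs_of_pos hα]
    have hBup : B ≤ 2 * α * |L| := by
      have h1 : B ≤ α * |L| + C := by
        rw [hB, hdecomp]
        calc ‖_ + _‖ ≤ ‖((α * L : ℝ) : ℂ)‖ + ‖(α:ℂ) * ((Complex.arg z : ℂ) * Complex.I) + β‖ :=
              norm_add_le _ _
          _ ≤ α * |L| + C := by rw [hmain]; gcongr
      have h2 : C ≤ α * |L| := by
        rw [div_le_iff₀ hα] at hLbig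
        nlinarith
      linarith
    have hBlo : α / 2 * |L| ≤ B := by
      have h1 : α * |L| - C ≤ B := by
        rw [hB, hdecomp]
        have h3 := norm_add_le (((α * L : ℝ) : ℂ) + ((α:ℂ) * ((Complex.arg z : ℂ) * Complex.I) + β))
          (-((α:ℂ) * ((Complex.arg z : ℂ) * Complex.I) + β))
        simp only [add_neg_cancel_right, norm_neg] at h3
        rw [hmain] at h3
        linarith
      have h2 : 2 * C ≤ α * |L| := by
        rw [div_le_iff₀ hα] at hLbig
        nlinarith
      nlinarith
    -- take norms in the equation
    have hnorm : ‖κ‖ * δ = ‖z‖ ^ 2 * B := by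
      have := congrArg norm hEq
      rwa [norm_mul, norm_mul, norm_pow, Complex.norm_real, Real.norm_eq_abs,
        abs_of_pos hδ0] at this
    have hsq : (0:ℝ) < ‖z‖ ^ 2 := by positivity
    constructor
    · rw [div_mul_eq_mul_div, div_le_iff₀ (by positivity)]
      calc ‖κ‖ * δ = ‖z‖ ^ 2 * B := hnorm
        _ ≤ ‖z‖ ^ 2 * (2 * α * |L|) := by gcongr
        _ = ‖z‖ ^ 2 * |L| * (2 * α) := by ring
      -- direction check below
    · rw [div_mul_eq_mul_div, le_div_iff₀ hα]
      calc ‖z‖ ^ 2 * |L| * α = ‖z‖ ^ 2 * (α * |L|) := by ring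
        _ ≤ ‖z‖ ^ 2 * (2 * B) := by
            have : α * |L| ≤ 2 * B := by nlinarith
            gcongr
        _ = 2 * (‖z‖ ^ 2 * B) := by ring
        _ = 2 * (‖κ‖ * δ) := by rw [hnorm]
        _ = 2 * ‖κ‖ * δ := by ring
end
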